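/- Let μ ∈ ℂ with μ ∉ {0,1,−1}. There is no A ∈ GL₂(ℂ) such that the map (x,y) ↦ (A·x, Ā·y) on ℙ¹(ℂ)×ℙ¹(ℂ) fixes ([1:0],[1:0]) and ([0:1],[0:1]) and exchanges ([1:1],[μ:1]) with ([μ̄:1],[1:1]); indeed such an A would force μ² = 1. -/

import Mathlib

noncomputable section

open ComplexConjugate

/-- The projective line `ℙ¹(K)` over a field `K`, i.e. the projectivization of `K²`. -/
abbrev Pone (K : Type) [Field K] : Type := Projectivization K (Fin 2 → K)

theorem vec_ne_zero {K : Type} [Field K] {a b : K} (h : a ≠ 0 ∨ b ≠ 0) :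
    (![a, b] : Fin 2 → K) ≠ 0 := by
  intro hv
  rcases h with h | h
  · exact h (by simpa using congrFun hv 0)
  · exact h (by simpa using congrFun hv 1)

/-- The point `[a : b]` of the projective line `ℙ¹(K)`. -/
def pt {K : Type} [Field K] (a b : K) (h : a ≠ 0 ∨ b ≠ 0) : Pone K :=
  Projectivization.mk K ![a, b] (vec_ne_zero h)

theorem mulVecLin_injective {K : Type} [Field K] (A : GL (Fin 2) K) :
    Function.Injective ⇑(Matrix.mulVecLin (A : Matrix (Fin 2) (Fin 2) K)) := by
  intro v w hvw
  have h1 : (A : Matrix (Fin 2) (Fin 2) K).mulVec v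
      = (A : Matrix (Fin 2) (Fin 2) K).mulVec w := hvw
  have h2 : ((↑(A⁻¹) : Matrix (Fin 2) (Fin 2) K) * (A : Matrix (Fin 2) (Fin 2) K)).mulVec v
      = ((↑(A⁻¹) : Matrix (Fin 2) (Fin 2) K) * (A : Matrix (Fin 2) (Fin 2) K)).mulVec w := by
    rw [← Matrix.mulVec_mulVec, ← Matrix.mulVec_mulVec, h1]
  rw [Units.inv_mul, Matrix.one_mulVec, Matrix.one_mulVec] at h2
  exact h2

/-- The action of `A ∈ GL₂(K)` on the projective line `ℙ¹(K)`: `A·[v] = [A v]`. -/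
def glMap {K : Type} [Field K] (A : GL (Fin 2) K) : Pone K → Pone K :=
  Projectivization.map (Matrix.mulVecLin (A : Matrix (Fin 2) (Fin 2) K)) (mulVecLin_injective A)

/-- Coordinatewise complex conjugation on `ℙ¹(ℂ)`: `[a : b] ↦ [ā : b̄]`. -/
def conjP1 (x : Pone ℂ) : Pone ℂ :=
  Projectivization.mk ℂ (fun i => conj (x.rep i)) (by
    intro hc
    apply x.rep_nonzero
    funext i
    have h2 : conj (x.rep i) = 0 := congrFun hc i
    simpa using h2)

/-- Entrywise complex conjugation `A ↦ Ā` on `GL₂(ℂ)`. -/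
def conjGL (A : GL (Fin 2) ℂ) : GL (Fin 2) ℂ :=
  Units.map (RingHom.toMonoidHom
    ((starRingEnd ℂ).mapMatrix : Matrix (Fin 2) (Fin 2) ℂ →+* Matrix (Fin 2) (Fin 2) ℂ)) A

/-- The antiholomorphic involution `σ(x, y) = (ȳ, x̄)` of `ℙ¹(ℂ) × ℙ¹(ℂ)` (the real structure
of the quadric `Q_{3,1}`). -/
def sigmaQ (P : Pone ℂ × Pone ℂ) : Pone ℂ × Pone ℂ := (conjP1 P.2, conjP1 P.1)

/-- The automorphism `φ_A : (x, y) ↦ (A·x, Ā·y)` of `ℙ¹(ℂ) × ℙ¹(ℂ)`. -/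
def phiA (A : GL (Fin 2) ℂ) (P : Pone ℂ × Pone ℂ) : Pone ℂ × Pone ℂ :=
  (glMap A P.1, glMap (conjGL A) P.2)

/-- The point `[1 : 0]` of `ℙ¹(ℂ)`. -/
def P10 : Pone ℂ := pt 1 0 (Or.inl one_ne_zero)

/-- The point `[0 : 1]` of `ℙ¹(ℂ)`. -/
def P01 : Pone ℂ := pt 0 1 (Or.inr one_ne_zero)

/-- The point `[1 : 1]` of `ℙ¹(ℂ)`. -/
def P11 : Pone ℂ := pt 1 1 (Or.inl one_ne_zero)

/-- The point `[a : 1]` of `ℙ¹(ℂ)`. -/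
def Pa (a : ℂ) : Pone ℂ := pt a 1 (Or.inr one_ne_zero)

theorem pt_def {K : Type} [Field K] (a b : K) (h : a ≠ 0 ∨ b ≠ 0) :
    pt a b h = Projectivization.mk K ![a, b] (vec_ne_zero h) := rfl

theorem glMap_pt {K : Type} [Field K] (A : GL (Fin 2) K) (a b : K) (h : a ≠ 0 ∨ b ≠ 0) :
    glMap A (pt a b h) = Projectivization.mk K
      ((A : Matrix (Fin 2) (Fin 2) K).mulVec ![a, b])
      (fun hc => vec_ne_zero h (mulVecLin_injective A (by
        simpa [Matrix.mulVecLin] using hc))) := by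
  rfl

/-- Let `μ ∈ ℂ ∖ {0, 1, −1}`. There is no `A ∈ GL₂(ℂ)` such that the map
`(x,y) ↦ (A·x, Ā·y)` fixes `([1:0],[1:0])` and `([0:1],[0:1])` and exchanges
`([1:1],[μ:1])` with `([μ̄:1],[1:1])`; indeed such an `A` would force `μ² = 1`. -/
theorem statement6 (μ : ℂ) (h0 : μ ≠ 0) (h1 : μ ≠ 1) (h2 : μ ≠ -1) :
    (∀ A : GL (Fin 2) ℂ,
        phiA A (P10, P10) = (P10, P10) →
        phiA A (P01, P01) = (P01, P01) →
        phiA A (P11, Pa μ) = (Pa (conj μ), P11) →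
        phiA A (Pa (conj μ), P11) = (P11, Pa μ) →
        μ ^ 2 = 1) ∧
    ¬∃ A : GL (Fin 2) ℂ,
        phiA A (P10, P10) = (P10, P10) ∧
        phiA A (P01, P01) = (P01, P01) ∧
        phiA A (P11, Pa μ) = (Pa (conj μ), P11) ∧
        phiA A (Pa (conj μ), P11) = (P11, Pa μ) := by
  have key : ∀ A : GL (Fin 2) ℂ,
      phiA A (P10, P10) = (P10, P10) →
      phiA A (P01, P01) = (P01, P01) →
      phiA A (P11, Pa μ) = (Pa (conj μ), P11) → μ ^ 2 = 1 := by
    intro A hA hB hC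
    have e1 : glMap A P10 = P10 := congrArg Prod.fst hA
    have e2 : glMap A P01 = P01 := congrArg Prod.fst hB
    have e3 : glMap A P11 = Pa (conj μ) := congrArg Prod.fst hC
    have e4 : glMap (conjGL A) (Pa μ) = P11 := congrArg Prod.snd hC
    set M : Matrix (Fin 2) (Fin 2) ℂ := (A : Matrix (Fin 2) (Fin 2) ℂ) with hM
    -- rewrite each equation via mk_eq_mk_iff'
    simp only [P10, P01, P11, Pa, pt, glMap, Projectivization.map_mk, Matrix.mulVecLin_apply,
      Projectivization.mk_eq_mk_iff'] at e1 e2 e3 e4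
    obtain ⟨c1, hc1⟩ := e1
    obtain ⟨c2, hc2⟩ := e2
    obtain ⟨c3, hc3⟩ := e3
    obtain ⟨c4, hc4⟩ := e4
    have m10 : M 1 0 = 0 := by
      have := congrFun hc1 1
      simpa [M, Matrix.mulVec, dotProduct, Fin.sum_univ_two, Matrix.vecHead,
        Matrix.vecTail, eq_comm] using this
    have m01 : M 0 1 = 0 := by
      have := congrFun hc2 0
      simpa [M, Matrix.mulVec, dotProduct, Fin.sum_univ_two, Matrix.vecHead,
        Matrix.vecTail, eq_comm] using this
    have f30 : M 0 0 + M 0 1 = c3 * conj μ := by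
      have := congrFun hc3 0
      simpa [M, Matrix.mulVec, Fin.sum_univ_two, Matrix.vecHead, Matrix.vecTail] using this.symm
    have f31 : M 1 0 + M 1 1 = c3 := by
      have := congrFun hc3 1
      simpa [M, Matrix.mulVec, Fin.sum_univ_two, Matrix.vecHead, Matrix.vecTail] using this.symm
    have f40 : conj (M 0 0) * μ + conj (M 0 1) = c4 := by
      have := congrFun hc4 0
      simpa [M, conjGL, Matrix.mulVec, Fin.sum_univ_two, Matrix.vecHead, Matrix.vecTail, Matrix.map_apply] using this.symm
    have f41 : conj (M 1 0) * μ + conj (M 1 1) = c4 := by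
      have := congrFun hc4 1
      simpa [M, conjGL, Matrix.mulVec, Fin.sum_univ_two, Matrix.vecHead, Matrix.vecTail, Matrix.map_apply] using this.symm
    have hA11 : M 1 1 ≠ 0 := by
      intro hz
      have hdet : M.det ≠ 0 := by
        have hu : IsUnit M.det := (Matrix.isUnit_iff_isUnit_det M).mp (Units.isUnit A)
        simpa [isUnit_iff_ne_zero] using hu
      apply hdet
      rw [Matrix.det_fin_two, m10, hz]
      ring
    -- from f30, m01: M00 = c3 * conj μ ; from f31, m10: M11 = c3
    have h00 : M 0 0 = c3 * conj μ := by rw [m01, add_zero] at f30; exact f30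
    have h11 : M 1 1 = c3 := by rw [m10, zero_add] at f31; exact f31
    -- from f40, m01 : conj(M00) * μ = c4 ; from f41, m10 : conj(M11) = c4
    have g0 : conj (M 0 0) * μ = c4 := by rw [m01, map_zero, add_zero] at f40; exact f40
    have g1 : conj (M 1 1) = c4 := by rw [m10, map_zero, zero_mul, zero_add] at f41; exact f41
    have hc3ne : conj c3 ≠ 0 := by
      simpa [← h11] using (star_ne_zero.mpr hA11 : conj (M 1 1) ≠ 0)
    have key2 : conj c3 * μ * μ = conj c3 := by
      rw [h00, map_mul, Complex.conj_conj] at g0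
      rw [h11] at g1
      rw [g0]; exact g1.symm
    have hsub : μ * μ - 1 = 0 := by
      have h' : conj c3 * (μ * μ - 1) = 0 := by linear_combination key2
      rcases mul_eq_zero.mp h' with h | h
      · exact absurd h hc3ne
      · exact h
    have hmm : μ * μ = 1 := by linear_combination hsub
    calc μ ^ 2 = μ * μ := sq μ
      _ = 1 := hmm
  constructor
  · intro A hA hB hC _; exact key A hA hB hC
  · rintro ⟨A, hA, hB, hC, _⟩
    have := key A hA hB hC
    have : (μ - 1) * (μ + 1) = 0 := by linear_combination this
    rcases mul_eq_zero.mp this with h | h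
    · exact h1 (sub_eq_zero.mp h)
    · exact h2 (eq_neg_of_add_eq_zero_left h)
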